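/- arXiv:1409.0309 — 4 statements merged into one kernel-verified Lean document; each statement's English description precedes it below -/
import Mathlib

section
/- If a machine M is TA-compliant with an architecture (D, ↝), then for all domains u ∈ D and all sequences α, α' ∈ A* such that ta_u(α) = ta_u(α'), we have view_u(α) = view_u(α'). -/
structure Machine (S A D O : Type) where
  s0 : S
  step : S → A → S
  dom : A → D
  obs : D → S → O

namespace Machine

def run {S A D O : Type} (M : Machine S A D O) (α : List A) : S :=
  α.foldl M.step M.s0

end Machine
/-- Elements of a view: actions or (group) observations. -/
inductive VE (A O' : Type) where
  | act : A → VE A O'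
  | obs : O' → VE A O'

open Classical in
/-- Absorptive concatenation: `σ ∘ x` is `σ` if `x` equals the last element of `σ`,
and `σ ++ [x]` otherwise. -/
noncomputable def absorb {X : Type} (σ : List X) (x : X) : List X :=
  if σ.getLast? = some x then σ else σ ++ [x]

open Classical in
/-- View of a group `G`, computed on the reversed action sequence. -/
noncomputable def viewR {S A D O : Type} (M : Machine S A D O) (G : Set D) :
    List A → List (VE A (G → O))
  | [] => [VE.obs (fun u : G => M.obs u.1 M.s0)]
  | a :: ρ =>
    let o : VE A (G → O) := VE.obs (fun u : G => M.obs u.1 (M.run ((a :: ρ).reverse)))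
    if M.dom a ∈ G then viewR M G ρ ++ [VE.act a, o] else absorb (viewR M G ρ) o

/-- The view of group `G` of the action sequence `α`. -/
noncomputable def view {S A D O : Type} (M : Machine S A D O) (G : Set D) (α : List A) :
    List (VE A (G → O)) :=
  viewR M G α.reverse
/-- Values of the `ta` function: nested tuples of actions. -/
inductive TA (A : Type) where
  | eps : TA A
  | node : TA A → TA A → A → TA A

open Classical in
/-- `ta`, computed on the reversed action sequence. -/
noncomputable def taR {A D : Type} (P : D → D → Prop) (dm : A → D) :
    List A → D → TA A
  | [], _ => TA.eps
  | a :: ρ, u =>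
    if P (dm a) u then TA.node (taR P dm ρ u) (taR P dm ρ (dm a)) a
    else taR P dm ρ u

/-- `ta P dm α u` : maximal information domain `u` is permitted to have after `α`. -/
noncomputable def ta {A D : Type} (P : D → D → Prop) (dm : A → D) (α : List A) (u : D) :
    TA A :=
  taR P dm α.reverse u

/-- TA-compliance of a machine with the information-flow policy `P`. -/
def TACompliant {S A D O : Type} (M : Machine S A D O) (P : D → D → Prop) : Prop :=
  ∀ (u : D) (α α' : List A), ta P M.dom α u = ta P M.dom α' u →
    M.obs u (M.run α) = M.obs u (M.run α')


lemma viewR_getLast? {S A D O : Type} (M : Machine S A D O) (G : Set D) (ρ : List A) :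
    (viewR M G ρ).getLast? =
      some (VE.obs (fun u : G => M.obs u.1 (M.run ρ.reverse))) := by
  cases ρ with
  | nil => simp [viewR, Machine.run]
  | cons a ρ =>
    simp only [viewR]
    split
    · simp
    · unfold absorb
      split
      · rename_i h
        rw [h]
      · simp

lemma viewR_skip {S A D O : Type} (M : Machine S A D O) (P : D → D → Prop)
    (hrefl : ∀ u, P u u) (hTA : TACompliant M P) (u : D) (a : A) (ρ : List A)
    (h : ¬ P (M.dom a) u) :
    viewR M {u} (a :: ρ) = viewR M {u} ρ := by
  have hta : ta P M.dom ((a :: ρ).reverse) u = ta P M.dom ρ.reverse u := by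
    simp [ta, taR, h]
  have hobs := hTA u _ _ hta
  have hfun : (fun v : ({u} : Set D) => M.obs v.1 (M.run ρ.reverse))
      = (fun v : ({u} : Set D) => M.obs v.1 (M.run (a :: ρ).reverse)) := by
    funext v
    rcases v with ⟨v, hv⟩
    simp only [Set.mem_singleton_iff] at hv
    subst hv
    exact hobs.symm
  have hne : M.dom a ∈ ({u} : Set D) → False := by
    intro he
    simp only [Set.mem_singleton_iff] at he
    exact h (he ▸ hrefl u)
  simp only [viewR, if_neg hne, absorb]
  rw [viewR_getLast?, hfun]
  simp

/-- TA-compliance implies equality of `ta` values yields equality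
of views. -/
theorem statement0 {S A D O : Type} (M : Machine S A D O) (P : D → D → Prop)
    (hrefl : ∀ u, P u u) (hTA : TACompliant M P) :
    ∀ (u : D) (α α' : List A),
      ta P M.dom α u = ta P M.dom α' u → view M {u} α = view M {u} α' := by
  intro u α α' h
  unfold view
  have key : ∀ n (ρ ρ' : List A), ρ.length + ρ'.length ≤ n →
      taR P M.dom ρ u = taR P M.dom ρ' u →
      viewR M {u} ρ = viewR M {u} ρ' := by
    intro n
    induction n with
    | zero =>
      intro ρ ρ' hl _
      cases ρ <;> cases ρ' <;> simp at hl <;> rfl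
    | succ n ih =>
      intro ρ ρ' hl ht
      cases ρ with
      | nil =>
        cases ρ' with
        | nil => rfl
        | cons a' σ' =>
          by_cases hP : P (M.dom a') u
          · exfalso
            simp [taR, hP] at ht
          · rw [viewR_skip M P hrefl hTA u a' σ' hP]
            apply ih [] σ' (by simp at hl ⊢; omega)
            simpa [taR, hP] using ht
      | cons a σ =>
        by_cases hP : P (M.dom a) u
        · cases ρ' with
          | nil =>
            exfalso
            simp [taR, hP] at ht
          | cons a' σ' =>
            by_cases hP' : P (M.dom a') u
            · have hobs := hTA u (a :: σ).reverse (a' :: σ').reverse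
                (by simpa [ta] using ht)
              have ht' := ht
              simp only [taR, hP, hP', if_true, TA.node.injEq] at ht'
              obtain ⟨h1, h2, h3⟩ := ht'
              subst h3
              have hview := ih σ σ' (by simp at hl ⊢; omega) h1
              have hfun : (fun v : ({u} : Set D) => M.obs v.1 (M.run (a :: σ).reverse))
                  = (fun v : ({u} : Set D) => M.obs v.1 (M.run (a :: σ').reverse)) := by
                funext v
                rcases v with ⟨v, hv⟩
                simp only [Set.mem_singleton_iff] at hv
                subst hv
                exact hobs
              simp only [viewR, hP, if_true]
              rw [hview, hfun]
            · rw [viewR_skip M P hrefl hTA u a' σ' hP']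
              apply ih (a :: σ) σ' (by simp at hl ⊢; omega)
              simpa [taR, hP'] using ht
        · rw [viewR_skip M P hrefl hTA u a σ hP]
          apply ih σ ρ' (by simp at hl ⊢; omega)
          simpa [taR, hP] using ht
  exact key _ _ _ le_rfl (by simpa [ta] using h)
end

section
/- Let r : D₁ → D₂ be surjective and let M be a machine with domains D₁. Then for all interpretations π, all sequences α ∈ A*, and all formulas φ for the domains D₂ (not containing distributed knowledge operators), we have r(M),π,α ⊨ φ if and only if M,π,α ⊨ r⁻¹(φ). -/
/-- Formulas of the epistemic logic (without distributed knowledge). -/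
inductive Formula (PC D : Type) where
  | tru : Formula PC D
  | atom : PC → Formula PC D
  | neg : Formula PC D → Formula PC D
  | conj : Formula PC D → Formula PC D → Formula PC D
  | know : Set D → Formula PC D → Formula PC D

/-- Satisfaction relation `M,π,α ⊨ φ`. -/
def sat {S A D O PC : Type} (M : Machine S A D O) (π : PC → Set (List A)) :
    List A → Formula PC D → Prop
  | _, .tru => True
  | α, .atom p => α ∈ π p
  | α, .neg φ => ¬ sat M π α φ
  | α, .conj φ ψ => sat M π α φ ∧ sat M π α ψ
  | α, .know G φ => ∀ α', view M G α' = view M G α → sat M π α' φ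
open Classical in
/-- The machine `r(M)`: same states and transitions, domains `D₂`, domain
function `r ∘ dom`, and observation of `u ∈ D₂` the tuple of observations of
the domains in `r⁻¹(u)` (encoded as a partial function on `D₁`). -/
noncomputable def rMachine {S A D₁ D₂ O : Type} (M : Machine S A D₁ O) (r : D₁ → D₂) :
    Machine S A D₂ (D₁ → Option O) where
  s0 := M.s0
  step := M.step
  dom := r ∘ M.dom
  obs := fun u s v => if r v = u then some (M.obs v s) else none

/-- `r⁻¹(φ)`: replace every group `G` in a knowledge operator by `r⁻¹(G)`. -/
def rinv {PC D₁ D₂ : Type} (r : D₁ → D₂) : Formula PC D₂ → Formula PC D₁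
  | .tru => .tru
  | .atom p => .atom p
  | .neg φ => .neg (rinv r φ)
  | .conj φ ψ => .conj (rinv r φ) (rinv r ψ)
  | .know G φ => .know (r ⁻¹' G) (rinv r φ)

/-- Map on view elements acting on the observation component. -/
def VE.mapObs {A O O' : Type} (f : O → O') : VE A O → VE A O'
  | .act a => .act a
  | .obs o => .obs (f o)

lemma VE.mapObs_injective {A O O' : Type} {f : O → O'} (hf : Function.Injective f) :
    Function.Injective (VE.mapObs (A := A) f) := by
  intro x y h
  cases x <;> cases y <;> simp [VE.mapObs] at h
  · simp [h]
  · simp [hf h]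

lemma VE.mapObs_obs {A O O' : Type} (f : O → O') (o : O) :
    VE.mapObs (A := A) f (VE.obs o) = VE.obs (f o) := rfl

lemma absorb_map {X Y : Type} {F : X → Y} (hF : Function.Injective F)
    (σ : List X) (x : X) :
    absorb (σ.map F) (F x) = (absorb σ x).map F := by
  unfold absorb
  rw [List.getLast?_map]
  cases h : σ.getLast? with
  | none => simp
  | some y =>
    by_cases hxy : y = x
    · simp [hxy]
    · have : ¬ F y = F x := fun h' => hxy (hF h')
      simp [this, hxy]

section Main
variable {S A D₁ D₂ O : Type} (M : Machine S A D₁ O) (r : D₁ → D₂) (G : Set D₂)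

open Classical in
/-- Encoding of an `r⁻¹(G)`-observation as a `G`-observation of `r(M)`. -/
noncomputable def obsEnc (g : (r ⁻¹' G : Set D₁) → O) : ↥G → D₁ → Option O :=
  fun u v => if h : r v = u.1 then some (g ⟨v, show r v ∈ G from h ▸ u.2⟩) else none

lemma obsEnc_injective : Function.Injective (obsEnc (O := O) r G) := by
  intro g₁ g₂ h
  funext v
  have := congrFun (congrFun h ⟨r v.1, v.2⟩) v.1
  simpa [obsEnc] using this

lemma obs_eq (s : S) :
    (fun u : ↥G => (rMachine M r).obs u.1 s)
      = obsEnc r G (fun v : (r ⁻¹' G : Set D₁) => M.obs v.1 s) := by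
  funext u v
  by_cases h : r v = u.1 <;> simp [rMachine, obsEnc, h]

lemma run_eq (ρ : List A) : (rMachine M r).run ρ = M.run ρ := rfl

lemma viewR_eq (ρ : List A) :
    viewR (rMachine M r) G ρ
      = (viewR M (r ⁻¹' G) ρ).map (VE.mapObs (obsEnc r G)) := by
  induction ρ with
  | nil =>
    exact congrArg (fun o => [VE.obs o]) (obs_eq M r G M.s0)
  | cons a ρ ih =>
    simp only [viewR, run_eq]
    by_cases h : r (M.dom a) ∈ G
    · have h' : (rMachine M r).dom a ∈ G := h
      have h'' : M.dom a ∈ r ⁻¹' G := h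
      rw [if_pos h', if_pos h'', ih, obs_eq]
      simp [VE.mapObs]
    · have h' : ¬ (rMachine M r).dom a ∈ G := h
      have h'' : ¬ M.dom a ∈ r ⁻¹' G := h
      rw [if_neg h', if_neg h'', ih, obs_eq]
      rw [← VE.mapObs_obs]
      exact absorb_map (VE.mapObs_injective (obsEnc_injective r G)) _ _

lemma view_iff (α β : List A) :
    view (rMachine M r) G α = view (rMachine M r) G β
      ↔ view M (r ⁻¹' G) α = view M (r ⁻¹' G) β := by
  unfold view
  rw [viewR_eq, viewR_eq]
  exact ⟨fun h => List.map_injective_iff.mpr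
      (VE.mapObs_injective (obsEnc_injective r G)) h, fun h => by rw [h]⟩

end Main

/-- `r(M),π,α ⊨ φ` iff `M,π,α ⊨ r⁻¹(φ)`. -/
theorem statement2 {S A D₁ D₂ O PC : Type} (r : D₁ → D₂)
    (hr : Function.Surjective r) (M : Machine S A D₁ O)
    (π : PC → Set (List A)) (α : List A) (φ : Formula PC D₂) :
    sat (rMachine M r) π α φ ↔ sat M π α (rinv r φ) := by
  induction φ generalizing α with
  | tru => simp [sat, rinv]
  | atom p => simp [sat, rinv]
  | neg φ ih => simp [sat, rinv, ih]
  | conj φ ψ ih₁ ih₂ => simp [sat, rinv, ih₁, ih₂]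
  | know G φ ih =>
    simp only [sat, rinv]
    constructor
    · intro h α' hv
      exact (ih α').mp (h α' ((view_iff M r G α' α).mpr hv))
    · intro h α' hv
      exact (ih α').mpr (h α' ((view_iff M r G α' α).mp hv))
end

section
/- Let A₁ = (D, ↝₁) be an architecture, and let A₂ = (D, ↝₂) be the extended architecture such that (u,v,f) ∈ ↝₂ if and only if f = ⊤ and (u,v) ∈ ↝₁. Let M be a machine with domains D, actions A and domain function dom, and let ℐ = (A, dom, 𝕀) be any interpretation for A₂ with this set of actions and domain function. Then M is TA-compliant with A₁ if and only if M is FTA-compliant with (A₂, ℐ). -/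
/-- An extended architecture: `edge u v = none` means no edge, `edge u v = some none`
means an edge labelled `⊤`, and `edge u v = some (some f)` means an edge labelled by
the filter-function name `f`.  There is at most one label per ordered pair by
construction, and the relation is reflexive with label `⊤`. -/
structure ExtArch (D L : Type) where
  edge : D → D → Option (Option L)
  refl : ∀ u, edge u u = some none

/-- Values of the `tf` function and of filter-function interpretations:
`eps` is the empty value ε, `base v` an arbitrary basic value, and
`pair σ a` the pair `(σ, a)` of a `tf` value and an action. -/
inductive TFVal (A V : Type) where
  | eps : TFVal A V
  | base : V → TFVal A V
  | pair : List (TFVal A V) → A → TFVal A V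

/-- `σ ⌢ x`: appends `x` as a single new last element unless `x = ε`. -/
def snoc' {A V : Type} (σ : List (TFVal A V)) : TFVal A V → List (TFVal A V)
  | .eps => σ
  | x => σ ++ [x]

/-- `tf`, computed on the reversed action sequence. -/
def tfR {A D L V : Type} (Arch : ExtArch D L) (dm : A → D)
    (I : L → List A → A → TFVal A V) : List A → D → List (TFVal A V)
  | [], _ => []
  | a :: ρ, u =>
    match Arch.edge (dm a) u with
    | none => tfR Arch dm I ρ u
    | some none => tfR Arch dm I ρ u ++ [TFVal.pair (tfR Arch dm I ρ (dm a)) a]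
    | some (some f) => snoc' (tfR Arch dm I ρ u) (I f ρ.reverse a)

/-- `tf Arch dm I α u` : maximal information domain `u` is permitted to have after `α`. -/
def tf {A D L V : Type} (Arch : ExtArch D L) (dm : A → D)
    (I : L → List A → A → TFVal A V) (α : List A) (u : D) : List (TFVal A V) :=
  tfR Arch dm I α.reverse u

/-- `inF Arch dm I α a u` : the information `in_{dom(a),u}(α, a)` transmitted to `u`
when action `a` is performed after `α`. -/
def inF {A D L V : Type} (Arch : ExtArch D L) (dm : A → D)
    (I : L → List A → A → TFVal A V) (α : List A) (a : A) (u : D) : TFVal A V :=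
  match Arch.edge (dm a) u with
  | none => TFVal.eps
  | some none => TFVal.pair (tf Arch dm I α (dm a)) a
  | some (some f) => I f α a
/-- FTA-compliance of a machine with an interpreted extended architecture
(whose actions, domains and domain function are those of the machine). -/
def FTACompliant {S A D O L V : Type} (M : Machine S A D O) (Arch : ExtArch D L)
    (I : L → List A → A → TFVal A V) : Prop :=
  ∀ (u : D) (α α' : List A), tf Arch M.dom I α u = tf Arch M.dom I α' u →
    M.obs u (M.run α) = M.obs u (M.run α')

open Classical in
/-- The extended architecture obtained from a reflexive information-flow policy
`P` by labelling every permitted flow with `⊤`. -/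
noncomputable def liftArch {D L : Type} (P : D → D → Prop) (hrefl : ∀ u, P u u) :
    ExtArch D L where
  edge u v := if P u v then some none else none
  refl u := if_pos (hrefl u)

def taToTf {A V : Type} : TA A → List (TFVal A V)
  | .eps => []
  | .node σ τ a => taToTf σ ++ [TFVal.pair (taToTf τ) a]

theorem taToTf_inj {A V : Type} : ∀ σ τ : TA A,
    taToTf (V := V) σ = taToTf (V := V) τ → σ = τ := by
  intro σ
  induction σ with
  | eps =>
    intro τ h
    cases τ with
    | eps => rfl
    | node σ' τ' a => simp [taToTf] at h
  | node σ₁ τ₁ a ih₁ ih₂ =>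
    intro τ h
    cases τ with
    | eps => simp [taToTf] at h
    | node σ₂ τ₂ b =>
      simp only [taToTf] at h
      have h2 := List.append_inj' h (by simp)
      obtain ⟨h3, h4⟩ := h2
      have h4' : TFVal.pair (taToTf (V := V) τ₁) a = TFVal.pair (taToTf τ₂) b := by
        simpa using h4
      injection h4' with h5 h6
      rw [ih₁ _ h3, ih₂ _ h5, h6]

open Classical in
theorem tfR_eq_taR {A D L V : Type} (P : D → D → Prop) (hrefl : ∀ u, P u u)
    (dm : A → D) (I : L → List A → A → TFVal A V) :
    ∀ (ρ : List A) (u : D),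
      tfR (liftArch P hrefl) dm I ρ u = taToTf (taR P dm ρ u) := by
  intro ρ
  induction ρ with
  | nil => intro u; simp [tfR, taR, taToTf]
  | cons a ρ ih =>
    intro u
    have he : (liftArch (L := L) P hrefl).edge (dm a) u
        = if P (dm a) u then some none else none := rfl
    by_cases h : P (dm a) u
    · simp only [tfR, taR, he, if_pos h, ih, taToTf]
    · simp only [tfR, taR, he, if_neg h, ih]

/-- `M` is TA-compliant with `(D, ↝₁)` iff `M` is FTA-compliant
with the corresponding all-`⊤` extended architecture under any interpretation. -/
theorem statement6 {S A D O L V : Type} (M : Machine S A D O)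
    (P : D → D → Prop) (hrefl : ∀ u, P u u)
    (I : L → List A → A → TFVal A V) :
    TACompliant M P ↔ FTACompliant M (liftArch P hrefl) I := by
  constructor
  · intro hc u α α' h
    apply hc u α α'
    unfold tf at h
    rw [tfR_eq_taR P hrefl, tfR_eq_taR P hrefl] at h
    exact taToTf_inj _ _ h
  · intro hc u α α' h
    apply hc u α α'
    unfold ta at h
    unfold tf
    rw [tfR_eq_taR P hrefl (I := I), tfR_eq_taR P hrefl (I := I), h]
end

section
/- If messages are source-identifying with respect to r, and r satisfies conditions S1, S2 and S5, then r satisfies condition S4. -/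
/-- Condition S1: `r` is onto `D₂` and `dm₂ = r ∘ dm₁`. -/
def CondS1 {A D₁ D₂ : Type} (dm₁ : A → D₁) (dm₂ : A → D₂) (r : D₁ → D₂) : Prop :=
  Function.Surjective r ∧ dm₂ = r ∘ dm₁

/-- Condition S2: `⊤`-edges are mapped to `⊤`-edges. -/
def CondS2 {D₁ D₂ L₁ L₂ : Type} (A₁ : ExtArch D₁ L₁) (A₂ : ExtArch D₂ L₂)
    (r : D₁ → D₂) : Prop :=
  ∀ u v : D₁, A₁.edge u v = some none → A₂.edge (r u) (r v) = some none

/-- Condition S3. -/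
def CondS3 {A D₁ D₂ L₁ L₂ V₁ V₂ : Type} (A₁ : ExtArch D₁ L₁) (dm₁ : A → D₁)
    (I₁ : L₁ → List A → A → TFVal A V₁) (A₂ : ExtArch D₂ L₂)
    (I₂ : L₂ → List A → A → TFVal A V₂) (r : D₁ → D₂) : Prop :=
  ∀ (u v : D₁) (f₁ : L₁), A₁.edge u v = some (some f₁) →
    ∃ f₂ : Option L₂, A₂.edge (r u) (r v) = some f₂ ∧
      (f₂ = none ∨ ∃ g₂ : L₂, f₂ = some g₂ ∧
        ∀ (α : List A) (a : A), dm₁ a = u →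
          I₂ g₂ α a = TFVal.eps → I₁ f₁ α a = TFVal.eps)

/-- Condition S4. -/
def CondS4 {A D₁ D₂ L₁ L₂ V₁ V₂ : Type} (A₁ : ExtArch D₁ L₁) (dm₁ : A → D₁)
    (I₁ : L₁ → List A → A → TFVal A V₁) (A₂ : ExtArch D₂ L₂) (dm₂ : A → D₂)
    (I₂ : L₂ → List A → A → TFVal A V₂) (r : D₁ → D₂) : Prop :=
  ∀ (u : D₁) (a b : A) (f₂ g₂ : L₂),
    A₂.edge (dm₂ a) (r u) = some (some f₂) →
    A₂.edge (dm₂ b) (r u) = some (some g₂) →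
    -- (a)
    ((A₁.edge (dm₁ a) u = none ∧ A₁.edge (dm₁ b) u = none) ∨
    -- (b)
    (∃ f₁ : L₁, A₁.edge (dm₁ a) u = some (some f₁) ∧ A₁.edge (dm₁ b) u = none ∧
      ∀ (α β : List A), I₂ f₂ α a = I₂ g₂ β b → I₂ f₂ α a ≠ TFVal.eps →
        I₁ f₁ α a = TFVal.eps) ∨
    -- (c)
    (A₁.edge (dm₁ a) u = none ∧ ∃ g₁ : L₁, A₁.edge (dm₁ b) u = some (some g₁) ∧
      ∀ (α β : List A), I₂ f₂ α a = I₂ g₂ β b → I₂ f₂ α a ≠ TFVal.eps →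
        I₁ g₁ β b = TFVal.eps) ∨
    -- (d)
    (∃ f₁ g₁ : L₁, A₁.edge (dm₁ a) u = some (some f₁) ∧
      A₁.edge (dm₁ b) u = some (some g₁) ∧
      ∀ (α β : List A), I₂ f₂ α a = I₂ g₂ β b → I₂ f₂ α a ≠ TFVal.eps →
        I₁ f₁ α a = I₁ g₁ β b))

/-- Condition S5. -/
def CondS5 {A D₁ D₂ L₁ L₂ V₁ V₂ : Type} (A₁ : ExtArch D₁ L₁) (dm₁ : A → D₁)
    (I₁ : L₁ → List A → A → TFVal A V₁) (A₂ : ExtArch D₂ L₂) (dm₂ : A → D₂)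
    (I₂ : L₂ → List A → A → TFVal A V₂) (r : D₁ → D₂) : Prop :=
  ∀ (α β : List A) (a b : A) (v : D₁) (f₁ : L₁) (f₂ : L₂),
    dm₁ a = dm₁ b →
    A₁.edge (dm₁ a) v = some (some f₁) →
    A₂.edge (dm₂ a) (r v) = some (some f₂) →
    I₂ f₂ α a = I₂ f₂ β b → I₂ f₂ α a ≠ TFVal.eps →
    I₁ f₁ α a = I₁ f₁ β b

/-- Messages are source-identifying with respect to `r`: some function `𝒮`
recovers the (concrete) source domain of every non-`ε` filtered message. -/
def SourceIdentifying {A D₁ D₂ L₂ V₂ : Type} (dm₁ : A → D₁)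
    (A₂ : ExtArch D₂ L₂) (I₂ : L₂ → List A → A → TFVal A V₂) (r : D₁ → D₂) :
    Prop :=
  ∃ Srce : TFVal A V₂ → D₁,
    ∀ (α : List A) (a : A) (w : D₂) (f₂ : L₂),
      A₂.edge (r (dm₁ a)) w = some (some f₂) → I₂ f₂ α a ≠ TFVal.eps →
        Srce (I₂ f₂ α a) = dm₁ a

/-- if messages are source-identifying with respect to `r` and
`r` satisfies S1, S2 and S5, then `r` satisfies S4. -/
theorem statement17 {A D₁ D₂ L₁ L₂ V₁ V₂ : Type}
    (A₁ : ExtArch D₁ L₁) (dm₁ : A → D₁) (I₁ : L₁ → List A → A → TFVal A V₁)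
    (A₂ : ExtArch D₂ L₂) (dm₂ : A → D₂) (I₂ : L₂ → List A → A → TFVal A V₂)
    (r : D₁ → D₂)
    (hsi : SourceIdentifying dm₁ A₂ I₂ r)
    (h1 : CondS1 dm₁ dm₂ r) (h2 : CondS2 A₁ A₂ r)
    (h5 : CondS5 A₁ dm₁ I₁ A₂ dm₂ I₂ r) :
    CondS4 A₁ dm₁ I₁ A₂ dm₂ I₂ r := by
  obtain ⟨Srce, hS⟩ := hsi
  obtain ⟨-, hdm⟩ := h1
  intro u a b f₂ g₂ hfa hfb
  have hra : dm₂ a = r (dm₁ a) := by rw [hdm]; rfl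
  have hrb : dm₂ b = r (dm₁ b) := by rw [hdm]; rfl
  -- From equal non-ε messages, sources agree
  have key : ∀ (α β : List A), I₂ f₂ α a = I₂ g₂ β b → I₂ f₂ α a ≠ TFVal.eps →
      dm₁ a = dm₁ b := by
    intro α β heq hne
    have ha := hS α a (r u) f₂ (by rw [← hra]; exact hfa) hne
    have hb := hS β b (r u) g₂ (by rw [← hrb]; exact hfb) (by rw [← heq]; exact hne)
    rw [heq] at ha
    exact ha ▸ hb ▸ rfl
  -- top-edges from dm₁ a (or b) to u are impossible
  cases hea : A₁.edge (dm₁ a) u with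
  | none =>
    cases heb : A₁.edge (dm₁ b) u with
    | none => exact Or.inl ⟨rfl, rfl⟩
    | some ob =>
      cases ob with
      | none =>
        exfalso
        have := h2 _ _ heb
        rw [← hrb] at this
        rw [hfb] at this
        simp at this
      | some g₁ =>
        refine Or.inr (Or.inr (Or.inl ⟨rfl, g₁, rfl, ?_⟩))
        intro α β heq hne
        exact absurd heb (by rw [← key α β heq hne, hea]; simp)
  | some oa =>
    cases oa with
    | none =>
      exfalso
      have := h2 _ _ hea
      rw [← hra] at this
      rw [hfa] at this
      simp at this
    | some f₁ =>
      cases heb : A₁.edge (dm₁ b) u with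
      | none =>
        refine Or.inr (Or.inl ⟨f₁, rfl, rfl, ?_⟩)
        intro α β heq hne
        exact absurd heb (by rw [← key α β heq hne, hea]; simp)
      | some ob =>
        cases ob with
        | none =>
          exfalso
          have := h2 _ _ heb
          rw [← hrb] at this
          rw [hfb] at this
          simp at this
        | some g₁ =>
          refine Or.inr (Or.inr (Or.inr ⟨f₁, g₁, rfl, rfl, ?_⟩))
          intro α β heq hne
          have hab := key α β heq hne
          have hfg₂ : f₂ = g₂ := by
            have : A₂.edge (dm₂ a) (r u) = some (some g₂) := by
              rw [hra, hab, ← hrb]; exact hfb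
            have := hfa.symm.trans this
            exact Option.some.inj (Option.some.inj this)
          have hfg₁ : f₁ = g₁ := by
            have : A₁.edge (dm₁ a) u = some (some g₁) := by rw [hab]; exact heb
            have := hea.symm.trans this
            exact Option.some.inj (Option.some.inj this)
          subst hfg₂
          subst hfg₁
          exact h5 α β a b u f₁ f₂ hab hea hfa heq hne
end
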